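/- Mehler's formula: for real x, y and real t with |t| < 1, the sum over n ≥ 0 of t^n * Ψ_n(x) * Ψ_n(y) equals (π(1-t²))^{-1/2} * exp((4xyt - (x²+y²)(1+t²))/(2(1-t²))), where Ψ_n(x) = (2^n n! √π)^{-1/2} H_n(x) e^{-x²/2} and H_n is the n-th Hermite polynomial. -/

import Mathlib

open Filter Topology

/-- The physicists' Hermite polynomial `H_n`, via the Rodrigues formula
`H_n(x) = (-1)^n e^{x²} (d/dx)^n e^{-x²}`. -/
noncomputable def physHermite (n : ℕ) (x : ℝ) : ℝ :=
  (-1) ^ n * Real.exp (x ^ 2) * iteratedDeriv n (fun y => Real.exp (-y ^ 2)) x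

/-- The normalized Hermite function `Ψ_n(x) = (2^n n! √π)^{-1/2} H_n(x) e^{-x²/2}`. -/
noncomputable def hermiteFun (n : ℕ) (x : ℝ) : ℝ :=
  ((2 : ℝ) ^ n * n.factorial * Real.sqrt Real.pi) ^ (-(1 : ℝ) / 2) *
    physHermite n x * Real.exp (-x ^ 2 / 2)

open Polynomial

noncomputable def mq : ℕ → Polynomial ℝ
  | 0 => 1
  | n + 1 => 2 • (Polynomial.X * mq n) - (mq n).derivative

lemma hasDerivAt_gauss (x : ℝ) :
    HasDerivAt (fun y : ℝ => Real.exp (-y ^ 2)) (-2 * x * Real.exp (-x ^ 2)) x := by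
  have h1 : HasDerivAt (fun y : ℝ => -y ^ 2) (-(2 * x)) x := by
    simpa using ((hasDerivAt_pow 2 x).fun_neg)
  simpa [mul_comm, mul_assoc] using h1.exp

lemma iteratedDeriv_gauss (n : ℕ) :
    iteratedDeriv n (fun y : ℝ => Real.exp (-y ^ 2))
      = fun x => (-1) ^ n * ((mq n).eval x * Real.exp (-x ^ 2)) := by
  induction n with
  | zero => simp [mq]
  | succ n ih =>
    rw [iteratedDeriv_succ, ih]
    funext x
    have h2 : HasDerivAt (fun x : ℝ => (mq n).eval x * Real.exp (-x ^ 2))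
        ((mq n).derivative.eval x * Real.exp (-x ^ 2)
          + (mq n).eval x * (-2 * x * Real.exp (-x ^ 2))) x :=
      ((mq n).hasDerivAt x).mul (hasDerivAt_gauss x)
    have h3 : HasDerivAt (fun x : ℝ => (-1 : ℝ) ^ n * ((mq n).eval x * Real.exp (-x ^ 2)))
        ((-1 : ℝ) ^ n * ((mq n).derivative.eval x * Real.exp (-x ^ 2)
          + (mq n).eval x * (-2 * x * Real.exp (-x ^ 2)))) x := h2.const_mul _
    rw [h3.deriv]
    show _ = (-1)^(n+1) * ((2 • (Polynomial.X * mq n) - (mq n).derivative).eval x * Real.exp (-x^2))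
    simp only [Polynomial.eval_sub, Polynomial.eval_smul, Polynomial.eval_mul, Polynomial.eval_X,
      smul_eq_mul, pow_succ]
    ring

lemma physHermite_eq (n : ℕ) (x : ℝ) : physHermite n x = (mq n).eval x := by
  rw [physHermite, iteratedDeriv_gauss]
  rw [show ((-1:ℝ)^n * Real.exp (x^2) * ((-1)^n * ((mq n).eval x * Real.exp (-x^2))))
    = ((-1:ℝ)^n)^2 * (Real.exp (x^2) * Real.exp (-x^2)) * (mq n).eval x by ring]
  rw [← Real.exp_add]
  rw [← pow_mul, mul_comm n 2, pow_mul, neg_one_sq, one_pow, one_mul]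
  simp

lemma mq_derivative : ∀ n : ℕ, (mq n).derivative = Polynomial.C (2 * (n : ℝ)) * mq (n - 1) := by
  have key : ∀ n : ℕ, (mq n).derivative = Polynomial.C (2 * (n : ℝ)) * mq (n - 1) ∧
      (mq (n + 1)).derivative = Polynomial.C (2 * ((n + 1 : ℕ) : ℝ)) * mq n := by
    intro n
    induction n with
    | zero =>
      constructor
      · simp [mq]
      · show (2 • (Polynomial.X * mq 0) - (mq 0).derivative).derivative = _
        simp [mq, map_ofNat]
    | succ n ih =>
      refine ⟨ih.2, ?_⟩
      show (2 • (Polynomial.X * mq (n + 1)) - (mq (n + 1)).derivative).derivative = _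
      rw [ih.2, derivative_sub, derivative_smul, derivative_mul, derivative_X, derivative_mul,
        derivative_C, ih.2, ih.1]
      rw [show mq (n + 1) = 2 • (Polynomial.X * mq n) - (mq n).derivative from rfl, ih.1]
      simp only [map_mul, map_ofNat, Polynomial.C_eq_natCast, smul_eq_mul, nsmul_eq_mul]
      push_cast
      ring
  exact fun n => (key n).1

lemma mq_rec (n : ℕ) :
    mq (n + 2) = Polynomial.C 2 * Polynomial.X * mq (n + 1)
      - Polynomial.C (2 * ((n + 1 : ℕ) : ℝ)) * mq n := by
  show 2 • (Polynomial.X * mq (n + 1)) - (mq (n + 1)).derivative = _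
  rw [mq_derivative (n + 1)]
  simp only [Nat.add_sub_cancel]
  rw [two_smul, map_ofNat]
  ring

lemma mq_zero : mq 0 = 1 := rfl
lemma mq_one : mq 1 = Polynomial.C 2 * Polynomial.X := by
  show 2 • (Polynomial.X * mq 0) - (mq 0).derivative = _
  simp [mq, map_ofNat]
open MeasureTheory

lemma integral_deriv_zero {E : Type*} [NormedAddCommGroup E] [NormedSpace ℝ E] [CompleteSpace E]
    {f f' : ℝ → E} (h : ∀ s, HasDerivAt f (f' s) s) (hi : Integrable f')
    (hbot : Tendsto f atBot (𝓝 0)) (htop : Tendsto f atTop (𝓝 0)) :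
    ∫ s : ℝ, f' s = 0 := by
  have h1 : Tendsto (fun R : ℝ => ∫ s in (-R)..R, f' s) atTop (𝓝 (∫ s, f' s)) :=
    intervalIntegral_tendsto_integral hi tendsto_neg_atTop_atBot tendsto_id
  have h2 : ∀ R : ℝ, ∫ s in (-R)..R, f' s = f R - f (-R) := fun R =>
    intervalIntegral.integral_eq_sub_of_hasDerivAt (fun s _ => h s) hi.intervalIntegrable
  have h3 : Tendsto (fun R : ℝ => f R - f (-R)) atTop (𝓝 (0 - 0)) :=
    htop.sub (hbot.comp tendsto_neg_atTop_atBot)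
  rw [sub_zero] at h3
  exact tendsto_nhds_unique (by simpa only [h2] using h1) h3

lemma tendsto_gauss_decay (m : ℕ) (c : ℝ) :
    Tendsto (fun R : ℝ => (c + |R|) ^ m * Real.exp (-R ^ 2)) atTop (𝓝 0) := by
  have hlim : Tendsto (fun R : ℝ => 2 ^ m * (R ^ m * Real.exp (-R))) atTop (𝓝 0) := by
    simpa using (Real.tendsto_pow_mul_exp_neg_atTop_nhds_zero m).const_mul ((2:ℝ) ^ m)
  apply squeeze_zero' ?_ ?_ hlim
  · filter_upwards [eventually_ge_atTop (max |c| 1)] with R hR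
    have : (0:ℝ) ≤ c + |R| := by
      have : |c| ≤ R := le_trans (le_max_left _ _) hR
      have hc : -c ≤ |c| := neg_le_abs c
      nlinarith [abs_nonneg R, le_abs_self R]
    positivity
  · filter_upwards [eventually_ge_atTop (max |c| 1)] with R hR
    have h1 : (1:ℝ) ≤ R := le_trans (le_max_right _ _) hR
    have hcR : |c| ≤ R := le_trans (le_max_left _ _) hR
    have hR0 : (0:ℝ) ≤ R := le_trans zero_le_one h1
    have habs : |R| = R := abs_of_nonneg hR0
    have hb : c + |R| ≤ 2 * R := by
      have := le_abs_self c
      rw [habs]; nlinarith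
    have hexp : Real.exp (-R ^ 2) ≤ Real.exp (-R) := by
      apply Real.exp_le_exp.2; nlinarith
    calc (c + |R|) ^ m * Real.exp (-R ^ 2) ≤ (2 * R) ^ m * Real.exp (-R) := by
          apply mul_le_mul (pow_le_pow_left₀ (by nlinarith [neg_le_abs c, le_abs_self R]) hb m)
            hexp (Real.exp_pos _).le (by positivity)
      _ = 2 ^ m * (R ^ m * Real.exp (-R)) := by rw [mul_pow]; ring

lemma tendsto_of_gauss_bound {E : Type*} [NormedAddCommGroup E] {f : ℝ → E} {c : ℝ} {m : ℕ}
    (hb : ∀ s, ‖f s‖ ≤ (c + |s|) ^ m * Real.exp (-s ^ 2)) :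
    Tendsto f atTop (𝓝 0) ∧ Tendsto f atBot (𝓝 0) := by
  constructor
  · exact squeeze_zero_norm hb (tendsto_gauss_decay m c)
  · apply squeeze_zero_norm hb
    have := (tendsto_gauss_decay m c).comp tendsto_neg_atBot_atTop
    simpa [Function.comp_def, abs_neg, neg_sq] using this

lemma integrable_abs_pow_gauss (k : ℕ) :
    Integrable (fun s : ℝ => |s| ^ k * Real.exp (-s ^ 2)) := by
  have h := (integrable_rpow_mul_exp_neg_mul_sq (b := 1) one_pos
    (s := (k : ℝ)) (lt_of_lt_of_le neg_one_lt_zero (Nat.cast_nonneg k))).abs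
  simp only [Real.rpow_natCast, neg_one_mul] at h
  convert h using 2 with s
  rw [abs_mul, abs_pow, abs_of_nonneg (Real.exp_pos _).le]

lemma integrable_shift_pow_gauss (m : ℕ) (c : ℝ) :
    Integrable (fun s : ℝ => (c + |s|) ^ m * Real.exp (-s ^ 2)) := by
  have heq : (fun s : ℝ => (c + |s|) ^ m * Real.exp (-s ^ 2))
      = fun s => ∑ k ∈ Finset.range (m + 1),
          (c ^ k * (m.choose k : ℝ)) * (|s| ^ (m - k) * Real.exp (-s ^ 2)) := by
    funext s
    rw [add_pow, Finset.sum_mul]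
    apply Finset.sum_congr rfl
    intro k _
    ring
  rw [heq]
  exact integrable_finset_sum _ fun k _ => (integrable_abs_pow_gauss (m - k)).const_mul _

noncomputable def Iz (x s : ℝ) : ℂ := (x : ℂ) + (s : ℂ) * Complex.I

lemma norm_Iz_le (x s : ℝ) : ‖Iz x s‖ ≤ |x| + |s| := by
  calc ‖Iz x s‖ ≤ ‖(x:ℂ)‖ + ‖(s:ℂ) * Complex.I‖ := norm_add_le _ _
  _ = |x| + |s| := by simp

lemma sq_norm_Iz (x s : ℝ) : ‖Iz x s‖ ^ 2 = x ^ 2 + s ^ 2 := by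
  rw [Complex.sq_norm]
  simp [Iz, Complex.normSq_apply]
  try ring

lemma norm_cexp_neg_sq (s : ℝ) : ‖Complex.exp (-(s:ℂ) ^ 2)‖ = Real.exp (-s ^ 2) := by
  rw [Complex.norm_exp]
  norm_cast

lemma norm_Iz_pow_cexp (k n : ℕ) (x s : ℝ) :
    ‖(s:ℂ) ^ k * (Iz x s) ^ n * Complex.exp (-(s:ℂ) ^ 2)‖
      ≤ (|x| + |s|) ^ (n + k) * Real.exp (-s ^ 2) := by
  rw [norm_mul, norm_mul, norm_cexp_neg_sq, norm_pow, norm_pow]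
  apply mul_le_mul_of_nonneg_right _ (Real.exp_pos _).le
  rw [pow_add, mul_comm ((|x| + |s|) ^ n)]
  apply mul_le_mul
  · apply pow_le_pow_left₀ (norm_nonneg _)
    simpa using le_add_of_nonneg_left (abs_nonneg x)
  · exact pow_le_pow_left₀ (norm_nonneg _) (norm_Iz_le x s) n
  · positivity
  · positivity

lemma continuous_Iz_pow_cexp (k n : ℕ) (x : ℝ) :
    Continuous (fun s : ℝ => (s:ℂ) ^ k * (Iz x s) ^ n * Complex.exp (-(s:ℂ) ^ 2)) := by
  apply Continuous.mul
  · apply Continuous.mul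
    · exact (Complex.continuous_ofReal).pow k
    · exact ((continuous_const.add ((Complex.continuous_ofReal).mul continuous_const)).pow n)
  · exact Complex.continuous_exp.comp ((Complex.continuous_ofReal.pow 2).neg)

lemma integrable_Iz_pow_cexp (k n : ℕ) (x : ℝ) :
    Integrable (fun s : ℝ => (s:ℂ) ^ k * (Iz x s) ^ n * Complex.exp (-(s:ℂ) ^ 2)) := by
  apply Integrable.mono' (integrable_shift_pow_gauss (n + k) |x|)
    (continuous_Iz_pow_cexp k n x).aestronglyMeasurable
  filter_upwards with s
  exact norm_Iz_pow_cexp k n x s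
noncomputable def Igauss (n : ℕ) (x : ℝ) : ℂ :=
  ∫ s : ℝ, (Iz x s) ^ n * Complex.exp (-(s:ℂ) ^ 2)

lemma integrable_Iz0 (n : ℕ) (x : ℝ) :
    Integrable (fun s : ℝ => (Iz x s) ^ n * Complex.exp (-(s:ℂ) ^ 2)) := by
  simpa using integrable_Iz_pow_cexp 0 n x

lemma integrable_Iz1 (n : ℕ) (x : ℝ) :
    Integrable (fun s : ℝ => (s:ℂ) * (Iz x s) ^ n * Complex.exp (-(s:ℂ) ^ 2)) := by
  simpa [pow_one] using integrable_Iz_pow_cexp 1 n x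

lemma hasDerivAt_ofReal_c (s : ℝ) : HasDerivAt (fun s : ℝ => (s:ℂ)) 1 s := by
  simpa using (hasDerivAt_id s).ofReal_comp

lemma hasDerivAt_Iz (x s : ℝ) : HasDerivAt (fun s : ℝ => Iz x s) Complex.I s := by
  have h := ((hasDerivAt_ofReal_c s).mul_const Complex.I).const_add (x:ℂ)
  simpa [Iz] using h

lemma hasDerivAt_Iz_pow (m : ℕ) (x s : ℝ) :
    HasDerivAt (fun s : ℝ => (Iz x s) ^ m) ((m:ℂ) * (Iz x s) ^ (m - 1) * Complex.I) s := by
  induction m with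
  | zero => simpa using hasDerivAt_const s (1:ℂ)
  | succ m ih =>
    have h : HasDerivAt (fun s : ℝ => (Iz x s) ^ m * Iz x s)
        (((m:ℂ) * (Iz x s) ^ (m - 1) * Complex.I) * Iz x s + (Iz x s) ^ m * Complex.I) s :=
      ih.mul (hasDerivAt_Iz x s)
    have h2 : HasDerivAt (fun s : ℝ => (Iz x s) ^ (m + 1))
        (((m:ℂ) * (Iz x s) ^ (m - 1) * Complex.I) * Iz x s + (Iz x s) ^ m * Complex.I) s := by
      simpa only [← pow_succ] using h
    convert h2 using 1
    cases m with
    | zero => simp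
    | succ k =>
      simp only [Nat.add_sub_cancel, Nat.succ_sub_one]
      push_cast
      ring

lemma hasDerivAt_cexp_sq (s : ℝ) :
    HasDerivAt (fun s : ℝ => Complex.exp (-(s:ℂ) ^ 2))
      (Complex.exp (-(s:ℂ) ^ 2) * (-(2 * (s:ℂ)))) s := by
  have h0 : HasDerivAt (fun s : ℝ => -(s:ℂ) ^ 2) (-(2 * (s:ℂ))) s := by
    have h := ((hasDerivAt_ofReal_c s).fun_mul (hasDerivAt_ofReal_c s)).fun_neg
    have h2 : (fun s : ℝ => -((s:ℂ) * (s:ℂ))) = fun s : ℝ => -(s:ℂ) ^ 2 := by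
      funext u; ring
    rw [h2] at h
    refine h.congr_deriv ?_
    ring
  exact h0.cexp

lemma odd_gauss_integral_zero : ∫ s : ℝ, (s:ℂ) * Complex.exp (-(s:ℂ) ^ 2) = 0 := by
  apply integral_deriv_zero (f := fun s : ℝ => (-(1:ℂ)/2) * Complex.exp (-(s:ℂ) ^ 2))
  · intro s
    have h := (hasDerivAt_cexp_sq s).const_mul (-(1:ℂ)/2)
    refine h.congr_deriv ?_
    ring
  · simpa [pow_one] using integrable_Iz_pow_cexp 1 0 0
  · refine (tendsto_of_gauss_bound (c := 1) (m := 0) ?_).2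
    intro s
    simp only [pow_zero, one_mul, norm_mul, norm_cexp_neg_sq]
    have h12 : ‖(-(1:ℂ)/2)‖ = 1/2 := by
      rw [norm_div, norm_neg, norm_one]
      simp
    rw [h12]
    nlinarith [Real.exp_pos (-s^2)]
  · refine (tendsto_of_gauss_bound (c := 1) (m := 0) ?_).1
    intro s
    simp only [pow_zero, one_mul, norm_mul, norm_cexp_neg_sq]
    have h12 : ‖(-(1:ℂ)/2)‖ = 1/2 := by
      rw [norm_div, norm_neg, norm_one]
      simp
    rw [h12]
    nlinarith [Real.exp_pos (-s^2)]

lemma Igauss_zero (x : ℝ) : Igauss 0 x = (Real.sqrt Real.pi : ℂ) := by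
  have h := integral_gaussian_complex (b := 1) (by norm_num)
  simp only [neg_one_mul, div_one] at h
  have h2 : ((Real.pi : ℂ)) ^ (1/2 : ℂ) = ((Real.sqrt Real.pi : ℝ) : ℂ) := by
    rw [Real.sqrt_eq_rpow, Complex.ofReal_cpow Real.pi_pos.le]
    push_cast
    rfl
  rw [Igauss]
  simp only [pow_zero, one_mul]
  rw [h, h2]

lemma Igauss_one (x : ℝ) : Igauss 1 x = (x : ℂ) * Real.sqrt Real.pi := by
  have hpt : ∀ s : ℝ, (Iz x s) ^ 1 * Complex.exp (-(s:ℂ) ^ 2)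
      = (x:ℂ) * ((Iz x s) ^ 0 * Complex.exp (-(s:ℂ) ^ 2))
        + Complex.I * ((s:ℂ) * Complex.exp (-(s:ℂ) ^ 2)) := by
    intro s
    simp only [Iz, pow_one, pow_zero, one_mul]
    ring
  rw [Igauss]
  simp only [hpt]
  rw [integral_add ((integrable_Iz0 0 x).const_mul _)
    ((by simpa [pow_one] using integrable_Iz_pow_cexp 1 0 0 :
      Integrable (fun s : ℝ => (s:ℂ) * Complex.exp (-(s:ℂ) ^ 2))).const_mul _)]
  rw [integral_const_mul, integral_const_mul, odd_gauss_integral_zero]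
  have h0 := Igauss_zero x
  rw [Igauss] at h0
  rw [h0]
  ring

lemma Igauss_rec (n : ℕ) (x : ℝ) :
    Igauss (n + 2) x = (x:ℂ) * Igauss (n + 1) x - ((n:ℂ) + 1) / 2 * Igauss n x := by
  -- integration by parts
  have hg : ∀ s : ℝ, HasDerivAt (fun s : ℝ => (Iz x s) ^ (n + 1) * Complex.exp (-(s:ℂ) ^ 2))
      (((n:ℂ) + 1) * Complex.I * ((Iz x s) ^ n * Complex.exp (-(s:ℂ) ^ 2))
        + (-2) * ((s:ℂ) * (Iz x s) ^ (n + 1) * Complex.exp (-(s:ℂ) ^ 2))) s := by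
    intro s
    have h := (hasDerivAt_Iz_pow (n + 1) x s).fun_mul (hasDerivAt_cexp_sq s)
    refine h.congr_deriv ?_
    simp only [Nat.add_sub_cancel]
    push_cast
    ring
  have hzero : ∫ s : ℝ, (((n:ℂ) + 1) * Complex.I * ((Iz x s) ^ n * Complex.exp (-(s:ℂ) ^ 2))
      + (-2) * ((s:ℂ) * (Iz x s) ^ (n + 1) * Complex.exp (-(s:ℂ) ^ 2))) = 0 := by
    apply integral_deriv_zero hg
    · exact ((integrable_Iz0 n x).const_mul _).add ((integrable_Iz1 (n + 1) x).const_mul _)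
    · refine (tendsto_of_gauss_bound (c := |x|) (m := n + 1) ?_).2
      intro s
      simpa using norm_Iz_pow_cexp 0 (n + 1) x s
    · refine (tendsto_of_gauss_bound (c := |x|) (m := n + 1) ?_).1
      intro s
      simpa using norm_Iz_pow_cexp 0 (n + 1) x s
  rw [integral_add ((integrable_Iz0 n x).const_mul _) ((integrable_Iz1 (n + 1) x).const_mul _),
    integral_const_mul, integral_const_mul] at hzero
  have hJ : ∫ s : ℝ, (s:ℂ) * (Iz x s) ^ (n + 1) * Complex.exp (-(s:ℂ) ^ 2)
      = ((n:ℂ) + 1) * Complex.I / 2 * Igauss n x := by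
    rw [Igauss]
    linear_combination -hzero / 2
  have hpt : ∀ s : ℝ, (Iz x s) ^ (n + 2) * Complex.exp (-(s:ℂ) ^ 2)
      = (x:ℂ) * ((Iz x s) ^ (n + 1) * Complex.exp (-(s:ℂ) ^ 2))
        + Complex.I * ((s:ℂ) * (Iz x s) ^ (n + 1) * Complex.exp (-(s:ℂ) ^ 2)) := by
    intro s
    have : (Iz x s) ^ (n + 2) = (Iz x s) ^ (n + 1) * ((x:ℂ) + (s:ℂ) * Complex.I) := by
      rw [pow_succ]; rfl
    rw [this]
    ring
  rw [show Igauss (n + 2) x = ∫ s : ℝ, (Iz x s) ^ (n + 2) * Complex.exp (-(s:ℂ) ^ 2) from rfl]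
  simp only [hpt]
  rw [integral_add ((integrable_Iz0 (n + 1) x).const_mul _) ((integrable_Iz1 (n + 1) x).const_mul _),
    integral_const_mul, integral_const_mul, hJ]
  rw [show (∫ s : ℝ, (Iz x s) ^ (n + 1) * Complex.exp (-(s:ℂ) ^ 2)) = Igauss (n + 1) x from rfl]
  linear_combination (((n:ℂ) + 1) / 2 * Igauss n x) * Complex.I_sq

lemma Igauss_eq (n : ℕ) (x : ℝ) :
    Igauss n x = (Real.sqrt Real.pi : ℂ) * (((mq n).eval x : ℝ) : ℂ) / 2 ^ n := by
  have key : ∀ n : ℕ, Igauss n x = (Real.sqrt Real.pi : ℂ) * (((mq n).eval x : ℝ) : ℂ) / 2 ^ n ∧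
      Igauss (n + 1) x = (Real.sqrt Real.pi : ℂ) * (((mq (n + 1)).eval x : ℝ) : ℂ) / 2 ^ (n + 1) := by
    intro n
    induction n with
    | zero =>
      constructor
      · rw [Igauss_zero, mq_zero]; simp
      · rw [Igauss_one, mq_one]
        simp only [Polynomial.eval_mul, Polynomial.eval_C, Polynomial.eval_X]
        push_cast
        ring
    | succ n ih =>
      refine ⟨ih.2, ?_⟩
      rw [show n + 1 + 1 = n + 2 from rfl, Igauss_rec, ih.1, ih.2, mq_rec]
      simp only [Polynomial.eval_sub, Polynomial.eval_mul, Polynomial.eval_C, Polynomial.eval_X]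
      push_cast
      field_simp
      ring
  exact (key n).1
noncomputable def Mk (k : ℕ) : ℝ := ∫ s : ℝ, s ^ (2 * k) * Real.exp (-s ^ 2)

lemma even_pow_eq_abs (s : ℝ) (k : ℕ) : s ^ (2 * k) = |s| ^ (2 * k) := by
  rw [← abs_pow, abs_of_nonneg]
  rw [mul_comm, pow_mul]
  positivity

lemma integrable_even_moment (k : ℕ) :
    Integrable (fun s : ℝ => s ^ (2 * k) * Real.exp (-s ^ 2)) := by
  have h := integrable_abs_pow_gauss (2 * k)
  apply h.congr
  filter_upwards with s
  rw [← even_pow_eq_abs]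

lemma Mk_nonneg (k : ℕ) : 0 ≤ Mk k := by
  apply integral_nonneg
  intro s
  dsimp only
  rw [even_pow_eq_abs]
  positivity

lemma Mk_zero : Mk 0 = Real.sqrt Real.pi := by
  have h := integral_gaussian 1
  simp only [neg_one_mul, div_one] at h
  rw [Mk]
  simpa using h

lemma Mk_succ (k : ℕ) : Mk (k + 1) = (2 * (k:ℝ) + 1) / 2 * Mk k := by
  have hg : ∀ s : ℝ, HasDerivAt (fun s : ℝ => s ^ (2 * k + 1) * Real.exp (-s ^ 2))
      ((2 * (k:ℝ) + 1) * (s ^ (2 * k) * Real.exp (-s ^ 2))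
        + (-2) * (s ^ (2 * (k + 1)) * Real.exp (-s ^ 2))) s := by
    intro s
    have h := (hasDerivAt_pow (2 * k + 1) s).fun_mul (hasDerivAt_gauss s)
    refine h.congr_deriv ?_
    simp only [Nat.add_sub_cancel]
    push_cast
    ring
  have hzero : ∫ s : ℝ, ((2 * (k:ℝ) + 1) * (s ^ (2 * k) * Real.exp (-s ^ 2))
      + (-2) * (s ^ (2 * (k + 1)) * Real.exp (-s ^ 2))) = 0 := by
    apply integral_deriv_zero hg
    · exact ((integrable_even_moment k).const_mul _).add
        ((integrable_even_moment (k + 1)).const_mul _)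
    · refine (tendsto_of_gauss_bound (c := 0) (m := 2 * k + 1) ?_).2
      intro s
      rw [norm_mul, Real.norm_eq_abs, Real.norm_eq_abs, abs_pow,
        abs_of_nonneg (Real.exp_pos _).le, zero_add]
    · refine (tendsto_of_gauss_bound (c := 0) (m := 2 * k + 1) ?_).1
      intro s
      rw [norm_mul, Real.norm_eq_abs, Real.norm_eq_abs, abs_pow,
        abs_of_nonneg (Real.exp_pos _).le, zero_add]
  rw [integral_add ((integrable_even_moment k).const_mul _)
      ((integrable_even_moment (k + 1)).const_mul _),
    integral_const_mul, integral_const_mul] at hzero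
  have e1 : (∫ s : ℝ, s ^ (2 * k) * Real.exp (-s ^ 2)) = Mk k := rfl
  have e2 : (∫ s : ℝ, s ^ (2 * (k + 1)) * Real.exp (-s ^ 2)) = Mk (k + 1) := rfl
  rw [e1, e2] at hzero
  linarith

lemma Mk_le (k : ℕ) : Mk k ≤ Real.sqrt Real.pi * (k.factorial : ℝ) := by
  induction k with
  | zero => simp [Mk_zero]
  | succ k ih =>
    rw [Mk_succ]
    have h1 : (2 * (k:ℝ) + 1) / 2 ≤ (k:ℝ) + 1 := by nlinarith [Nat.cast_nonneg (α := ℝ) k]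
    calc (2 * (k:ℝ) + 1) / 2 * Mk k ≤ ((k:ℝ) + 1) * (Real.sqrt Real.pi * (k.factorial : ℝ)) := by
          apply mul_le_mul h1 ih (Mk_nonneg k)
          positivity
      _ = Real.sqrt Real.pi * ((k + 1).factorial : ℝ) := by
          rw [Nat.factorial_succ]
          push_cast
          ring

noncomputable def Wint (m : ℕ) (x : ℝ) : ℝ := ∫ s : ℝ, (x ^ 2 + s ^ 2) ^ m * Real.exp (-s ^ 2)

lemma integrable_Wterm (m k : ℕ) (x : ℝ) :
    Integrable (fun s : ℝ => ((x ^ 2) ^ k * (m.choose k : ℝ)) * (s ^ (2 * (m - k)) * Real.exp (-s ^ 2))) :=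
  (integrable_even_moment (m - k)).const_mul _

lemma Wint_expand (m : ℕ) (x : ℝ) :
    Wint m x = ∑ k ∈ Finset.range (m + 1), ((x ^ 2) ^ k * (m.choose k : ℝ)) * Mk (m - k) := by
  have heq : (fun s : ℝ => (x ^ 2 + s ^ 2) ^ m * Real.exp (-s ^ 2))
      = fun s : ℝ => ∑ k ∈ Finset.range (m + 1),
          ((x ^ 2) ^ k * (m.choose k : ℝ)) * (s ^ (2 * (m - k)) * Real.exp (-s ^ 2)) := by
    funext s
    rw [add_pow, Finset.sum_mul]
    apply Finset.sum_congr rfl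
    intro k hk
    rw [← pow_mul]
    ring
  rw [Wint, heq, integral_finset_sum _ (fun k _ => integrable_Wterm m k x)]
  apply Finset.sum_congr rfl
  intro k _
  rw [integral_const_mul]
  rfl

lemma Wint_nonneg (m : ℕ) (x : ℝ) : 0 ≤ Wint m x := by
  apply integral_nonneg
  intro s
  positivity

lemma fact_sub_bound (m k : ℕ) (hk : k ∈ Finset.range (m + 1)) :
    ((m.choose k : ℝ)) * ((m - k).factorial : ℝ) ^ 2 ≤ (m.factorial : ℝ) ^ 2 / ((k.factorial : ℝ)) ^ 2 := by
  have hkm : k ≤ m := Nat.lt_succ_iff.mp (Finset.mem_range.mp hk)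
  have h1 : m.choose k * k.factorial * (m - k).factorial = m.factorial :=
    Nat.choose_mul_factorial_mul_factorial hkm
  have h1' : (m.choose k : ℝ) * (k.factorial : ℝ) * ((m - k).factorial : ℝ) = (m.factorial : ℝ) := by
    exact_mod_cast h1
  have h2 : ((k.factorial : ℝ)) * ((m - k).factorial : ℝ) ≤ (m.factorial : ℝ) := by
    have := Nat.factorial_mul_factorial_dvd_factorial hkm
    exact_mod_cast Nat.le_of_dvd (Nat.factorial_pos m) this
  have hkf : (0:ℝ) < (k.factorial : ℝ) := by exact_mod_cast Nat.factorial_pos k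
  have hmkf : (0:ℝ) < ((m - k).factorial : ℝ) := by exact_mod_cast Nat.factorial_pos (m - k)
  have hch : (0:ℝ) ≤ (m.choose k : ℝ) := Nat.cast_nonneg _
  have hch1 : (1:ℝ) ≤ (m.choose k : ℝ) := by
    exact_mod_cast Nat.succ_le_of_lt (Nat.choose_pos hkm)
  rw [le_div_iff₀ (by positivity)]
  have hm2 : (m.factorial:ℝ)^2
      = (m.choose k : ℝ)^2 * ((k.factorial:ℝ) * ((m - k).factorial:ℝ))^2 := by
    rw [← h1']; ring
  rw [hm2]
  have hA : (0:ℝ) ≤ ((k.factorial:ℝ) * ((m - k).factorial:ℝ))^2 := sq_nonneg _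
  nlinarith [mul_le_mul_of_nonneg_right (mul_le_mul_of_nonneg_left hch1 hch) hA]
lemma Wint_le (β : ℝ) (hβ : 0 < β) (x : ℝ) (m : ℕ) :
    Wint m x ≤ (Real.sqrt Real.pi * Real.exp β⁻¹) * (m.factorial : ℝ)
      * Real.sqrt (1 + β * x ^ 4) ^ m := by
  set K : ℝ := Real.sqrt Real.pi * Real.exp β⁻¹ with hK
  set c : ℝ := Real.sqrt (1 + β * x ^ 4) with hc
  have hc0 : 0 ≤ c := Real.sqrt_nonneg _
  have hc2 : c ^ 2 = 1 + β * x ^ 4 := Real.sq_sqrt (by positivity)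
  have hK0 : 0 < K := by positivity
  have hW : 0 ≤ Wint m x := Wint_nonneg m x
  -- it suffices to bound the squares
  have hsq : (Wint m x) ^ 2 ≤ (K * (m.factorial : ℝ) * c ^ m) ^ 2 := by
    rw [Wint_expand]
    set f : ℕ → ℝ := fun k => Real.sqrt (m.choose k : ℝ) * (x ^ 2) ^ k * Real.sqrt β ^ k with hf
    set g : ℕ → ℝ := fun k => Real.sqrt (m.choose k : ℝ) * Mk (m - k) * (Real.sqrt β)⁻¹ ^ k with hg
    have hfg : ∀ k ∈ Finset.range (m + 1),
        ((x ^ 2) ^ k * (m.choose k : ℝ)) * Mk (m - k) = f k * g k := by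
      intro k _
      rw [hf, hg]
      have h1 : Real.sqrt (m.choose k : ℝ) * Real.sqrt (m.choose k : ℝ) = (m.choose k : ℝ) :=
        Real.mul_self_sqrt (Nat.cast_nonneg _)
      have h2 : Real.sqrt β ^ k * (Real.sqrt β)⁻¹ ^ k = 1 := by
        rw [← mul_pow, mul_inv_cancel₀ (by positivity), one_pow]
      calc ((x ^ 2) ^ k * (m.choose k : ℝ)) * Mk (m - k)
          = (Real.sqrt (m.choose k : ℝ) * Real.sqrt (m.choose k : ℝ)) * (x ^ 2) ^ k * Mk (m - k)
            * (Real.sqrt β ^ k * (Real.sqrt β)⁻¹ ^ k) := by rw [h1, h2]; ring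
        _ = _ := by ring
    rw [Finset.sum_congr rfl hfg]
    have hCS := Finset.sum_mul_sq_le_sq_mul_sq (Finset.range (m + 1)) f g
    refine le_trans hCS ?_
    -- bound each factor
    have hf2 : ∑ k ∈ Finset.range (m + 1), f k ^ 2 = (β * x ^ 4 + 1) ^ m := by
      rw [add_pow]
      apply Finset.sum_congr rfl
      intro k hk
      rw [hf]
      have h1 : Real.sqrt (m.choose k : ℝ) ^ 2 = (m.choose k : ℝ) :=
        Real.sq_sqrt (Nat.cast_nonneg _)
      have h2 : Real.sqrt β ^ 2 = β := Real.sq_sqrt hβ.le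
      have e0 : (Real.sqrt (m.choose k : ℝ) * (x ^ 2) ^ k * Real.sqrt β ^ k) ^ 2
          = (Real.sqrt (m.choose k:ℝ) ^ 2) * ((x^2)^k)^2 * (Real.sqrt β ^ 2) ^ k := by ring
      rw [e0, h1, h2, one_pow, mul_one, mul_pow]
      ring
    have hg2 : ∑ k ∈ Finset.range (m + 1), g k ^ 2
        ≤ Real.pi * (m.factorial : ℝ) ^ 2 * Real.exp β⁻¹ := by
      have hterm : ∀ k ∈ Finset.range (m + 1),
          g k ^ 2 ≤ Real.pi * (m.factorial : ℝ) ^ 2 * (β⁻¹ ^ k / (k.factorial : ℝ)) := by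
        intro k hk
        rw [hg]
        have h1 : Real.sqrt (m.choose k : ℝ) ^ 2 = (m.choose k : ℝ) :=
          Real.sq_sqrt (Nat.cast_nonneg _)
        have h2 : ((Real.sqrt β)⁻¹ ^ k) ^ 2 = β⁻¹ ^ k := by
          rw [← pow_mul, mul_comm k 2, pow_mul, inv_pow, Real.sq_sqrt hβ.le]
        have e1 : (Real.sqrt (m.choose k:ℝ) * Mk (m - k) * (Real.sqrt β)⁻¹ ^ k) ^ 2
            = (m.choose k : ℝ) * Mk (m - k) ^ 2 * β⁻¹ ^ k := by
          have e0 : (Real.sqrt (m.choose k:ℝ) * Mk (m - k) * (Real.sqrt β)⁻¹ ^ k) ^ 2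
              = (Real.sqrt (m.choose k:ℝ) ^ 2) * Mk (m - k) ^ 2 * ((Real.sqrt β)⁻¹ ^ k) ^ 2 := by
            ring
          rw [e0, h1, h2]
        rw [e1]
        have hMk : Mk (m - k) ^ 2 ≤ Real.pi * ((m - k).factorial : ℝ) ^ 2 := by
          have h := Mk_le (m - k)
          have h0 := Mk_nonneg (m - k)
          have hπ : Real.sqrt Real.pi ^ 2 = Real.pi := Real.sq_sqrt Real.pi_pos.le
          nlinarith [Real.sqrt_nonneg Real.pi]
        have hfs := fact_sub_bound m k hk
        have hkf : (0:ℝ) < (k.factorial : ℝ) := by exact_mod_cast Nat.factorial_pos k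
        have hβk : (0:ℝ) ≤ β⁻¹ ^ k := by positivity
        have hch : (0:ℝ) ≤ (m.choose k : ℝ) := Nat.cast_nonneg _
        -- choose * Mk² ≤ choose * π * (m-k)!² ≤ π * m!²/k!²  ≤ π m!² / k!
        have step1 : (m.choose k : ℝ) * Mk (m - k) ^ 2
            ≤ Real.pi * ((m.factorial : ℝ) ^ 2 / (k.factorial : ℝ) ^ 2) := by
          calc (m.choose k : ℝ) * Mk (m - k) ^ 2
              ≤ (m.choose k : ℝ) * (Real.pi * ((m - k).factorial : ℝ) ^ 2) :=
                mul_le_mul_of_nonneg_left hMk hch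
            _ = Real.pi * ((m.choose k : ℝ) * ((m - k).factorial : ℝ) ^ 2) := by ring
            _ ≤ Real.pi * ((m.factorial : ℝ) ^ 2 / (k.factorial : ℝ) ^ 2) :=
                mul_le_mul_of_nonneg_left hfs Real.pi_pos.le
        have step2 : Real.pi * ((m.factorial : ℝ) ^ 2 / (k.factorial : ℝ) ^ 2)
            ≤ Real.pi * ((m.factorial : ℝ) ^ 2 / (k.factorial : ℝ)) := by
          apply mul_le_mul_of_nonneg_left _ Real.pi_pos.le
          apply div_le_div_of_nonneg_left (by positivity) hkf
          calc (k.factorial : ℝ) = (k.factorial : ℝ) * 1 := by ring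
            _ ≤ (k.factorial : ℝ) * (k.factorial : ℝ) := by
                apply mul_le_mul_of_nonneg_left _ hkf.le
                exact_mod_cast Nat.one_le_iff_ne_zero.mpr (Nat.factorial_ne_zero k)
            _ = (k.factorial : ℝ) ^ 2 := by ring
        calc (m.choose k : ℝ) * Mk (m - k) ^ 2 * β⁻¹ ^ k
            ≤ Real.pi * ((m.factorial : ℝ) ^ 2 / (k.factorial : ℝ)) * β⁻¹ ^ k := by
              apply mul_le_mul_of_nonneg_right (le_trans step1 step2) hβk
          _ = Real.pi * (m.factorial : ℝ) ^ 2 * (β⁻¹ ^ k / (k.factorial : ℝ)) := by ring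
      calc ∑ k ∈ Finset.range (m + 1), g k ^ 2
          ≤ ∑ k ∈ Finset.range (m + 1), Real.pi * (m.factorial : ℝ) ^ 2 * (β⁻¹ ^ k / (k.factorial : ℝ)) :=
            Finset.sum_le_sum hterm
        _ = Real.pi * (m.factorial : ℝ) ^ 2
            * ∑ k ∈ Finset.range (m + 1), β⁻¹ ^ k / (k.factorial : ℝ) := by
            rw [Finset.mul_sum]
        _ ≤ Real.pi * (m.factorial : ℝ) ^ 2 * Real.exp β⁻¹ := by
            apply mul_le_mul_of_nonneg_left (Real.sum_le_exp_of_nonneg (by positivity) _)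
            positivity
    have hf2' : ∑ k ∈ Finset.range (m + 1), f k ^ 2 = (c ^ 2) ^ m := by
      rw [hf2, hc2]; ring_nf
    calc (∑ k ∈ Finset.range (m + 1), f k ^ 2) * ∑ k ∈ Finset.range (m + 1), g k ^ 2
        ≤ (c ^ 2) ^ m * (Real.pi * (m.factorial : ℝ) ^ 2 * Real.exp β⁻¹) := by
          rw [hf2']
          apply mul_le_mul_of_nonneg_left hg2 (by positivity)
      _ ≤ (K * (m.factorial : ℝ) * c ^ m) ^ 2 := by
          rw [hK]
          have hπ : Real.sqrt Real.pi ^ 2 = Real.pi := Real.sq_sqrt Real.pi_pos.le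
          have hexp : Real.exp β⁻¹ ≤ Real.exp β⁻¹ * Real.exp β⁻¹ := by
            nlinarith [Real.exp_pos β⁻¹, Real.one_le_exp (le_of_lt (inv_pos.mpr hβ)), Real.exp_nonneg β⁻¹]
          calc (c ^ 2) ^ m * (Real.pi * (m.factorial : ℝ) ^ 2 * Real.exp β⁻¹)
              ≤ (c ^ 2) ^ m * (Real.pi * (m.factorial : ℝ) ^ 2 * (Real.exp β⁻¹ * Real.exp β⁻¹)) := by
                apply mul_le_mul_of_nonneg_left _ (by positivity)
                apply mul_le_mul_of_nonneg_left hexp (by positivity)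
            _ = (Real.sqrt Real.pi * Real.exp β⁻¹ * (m.factorial : ℝ) * c ^ m) ^ 2 := by
                rw [show (Real.sqrt Real.pi * Real.exp β⁻¹ * (m.factorial : ℝ) * c ^ m) ^ 2
                  = Real.sqrt Real.pi ^ 2 * (Real.exp β⁻¹ * Real.exp β⁻¹)
                    * (m.factorial : ℝ) ^ 2 * (c ^ 2) ^ m from by ring, hπ]
                ring
  nlinarith [hsq, hW, mul_nonneg (mul_nonneg hK0.le (Nat.cast_nonneg m.factorial)) (pow_nonneg hc0 m)]
noncomputable def Bq (n : ℕ) (x : ℝ) : ℝ := ∫ s : ℝ, ‖Iz x s‖ ^ n * Real.exp (-s ^ 2)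

lemma norm_Iz_integrand (n : ℕ) (x s : ℝ) :
    ‖(Iz x s) ^ n * Complex.exp (-(s:ℂ) ^ 2)‖ = ‖Iz x s‖ ^ n * Real.exp (-s ^ 2) := by
  rw [norm_mul, norm_pow, norm_cexp_neg_sq]

lemma integrable_norm_Iz_pow (n : ℕ) (x : ℝ) :
    Integrable (fun s : ℝ => ‖Iz x s‖ ^ n * Real.exp (-s ^ 2)) := by
  have h := (integrable_Iz0 n x).norm
  apply h.congr
  filter_upwards with s
  exact norm_Iz_integrand n x s

lemma Bq_nonneg (n : ℕ) (x : ℝ) : 0 ≤ Bq n x :=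
  integral_nonneg fun s => by positivity

lemma norm_Igauss_le (n : ℕ) (x : ℝ) : ‖Igauss n x‖ ≤ Bq n x := by
  rw [Igauss, Bq]
  refine le_trans (norm_integral_le_integral_norm _) ?_
  apply le_of_eq
  apply integral_congr_ae
  filter_upwards with s
  exact norm_Iz_integrand n x s

lemma Bq_even (m : ℕ) (x : ℝ) : Bq (2 * m) x = Wint m x := by
  rw [Bq, Wint]
  apply integral_congr_ae
  filter_upwards with s
  rw [pow_mul, sq_norm_Iz]

lemma Bq_odd_le (m : ℕ) (x : ℝ) : Bq (2 * m + 1) x ≤ Wint m x + Wint (m + 1) x := by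
  rw [Bq, Wint, Wint, ← integral_add
    (by
      have := integrable_norm_Iz_pow (2 * m) x
      apply this.congr
      filter_upwards with s
      rw [pow_mul, sq_norm_Iz])
    (by
      have := integrable_norm_Iz_pow (2 * (m + 1)) x
      apply this.congr
      filter_upwards with s
      rw [pow_mul, sq_norm_Iz])]
  apply integral_mono (integrable_norm_Iz_pow (2 * m + 1) x)
  · exact ((integrable_norm_Iz_pow (2 * m) x).congr (by
      filter_upwards with s
      rw [pow_mul, sq_norm_Iz])).add
      ((integrable_norm_Iz_pow (2 * (m + 1)) x).congr (by
      filter_upwards with s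
      rw [pow_mul, sq_norm_Iz]))
  · intro s
    have hr : (0:ℝ) ≤ ‖Iz x s‖ := norm_nonneg _
    have e1 : x ^ 2 + s ^ 2 = ‖Iz x s‖ ^ 2 := (sq_norm_Iz x s).symm
    have key : ‖Iz x s‖ ^ (2 * m + 1) ≤ ‖Iz x s‖ ^ (2 * m) + ‖Iz x s‖ ^ (2 * (m + 1)) := by
      have h1 : ‖Iz x s‖ ^ (2 * m + 1) = ‖Iz x s‖ ^ m * ‖Iz x s‖ ^ (m + 1) := by
        rw [← pow_add]; congr 1; ring
      have h2 : ‖Iz x s‖ ^ (2 * m) = (‖Iz x s‖ ^ m) ^ 2 := by rw [← pow_mul]; congr 1; ring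
      have h3 : ‖Iz x s‖ ^ (2 * (m + 1)) = (‖Iz x s‖ ^ (m + 1)) ^ 2 := by
        rw [← pow_mul]; congr 1; ring
      rw [h1, h2, h3]
      nlinarith [sq_nonneg (‖Iz x s‖ ^ m - ‖Iz x s‖ ^ (m + 1))]
    calc ‖Iz x s‖ ^ (2 * m + 1) * Real.exp (-s ^ 2)
        ≤ (‖Iz x s‖ ^ (2 * m) + ‖Iz x s‖ ^ (2 * (m + 1))) * Real.exp (-s ^ 2) :=
          mul_le_mul_of_nonneg_right key (Real.exp_pos _).le
      _ = (x ^ 2 + s ^ 2) ^ m * Real.exp (-s ^ 2) + (x ^ 2 + s ^ 2) ^ (m + 1) * Real.exp (-s ^ 2) := by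
          rw [pow_mul, pow_mul, sq_norm_Iz]
          ring

lemma Bq_le (β : ℝ) (hβ : 0 < β) (x : ℝ) (n : ℕ) :
    Bq n x ≤ 2 * ((Real.sqrt Real.pi * Real.exp β⁻¹) * ((n / 2 + 1).factorial : ℝ)
      * Real.sqrt (1 + β * x ^ 4) ^ (n / 2 + 1)) := by
  set K : ℝ := Real.sqrt Real.pi * Real.exp β⁻¹ with hK
  set c : ℝ := Real.sqrt (1 + β * x ^ 4) with hc
  have hK0 : 0 < K := by positivity
  have hc1 : 1 ≤ c := by
    rw [hc, Real.one_le_sqrt]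
    nlinarith [pow_nonneg (abs_nonneg x) 4, sq_abs x, hβ, pow_nonneg (sq_nonneg x) 2]
  have hc0 : 0 ≤ c := le_trans zero_le_one hc1
  have hmono : ∀ m : ℕ, K * (m.factorial : ℝ) * c ^ m
      ≤ K * ((m + 1).factorial : ℝ) * c ^ (m + 1) := by
    intro m
    have h1 : (m.factorial : ℝ) ≤ ((m + 1).factorial : ℝ) := by
      exact_mod_cast Nat.factorial_le (Nat.le_succ m)
    have h2 : c ^ m ≤ c ^ (m + 1) := pow_le_pow_right₀ hc1 (Nat.le_succ m)
    have hf0 : (0:ℝ) ≤ (m.factorial : ℝ) := Nat.cast_nonneg _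
    have hcm : (0:ℝ) ≤ c ^ m := pow_nonneg hc0 m
    calc K * (m.factorial : ℝ) * c ^ m ≤ K * ((m + 1).factorial : ℝ) * c ^ m := by
          apply mul_le_mul_of_nonneg_right (mul_le_mul_of_nonneg_left h1 hK0.le) hcm
      _ ≤ K * ((m + 1).factorial : ℝ) * c ^ (m + 1) := by
          apply mul_le_mul_of_nonneg_left h2 (by positivity)
  rcases Nat.even_or_odd n with he | ho
  · obtain ⟨m, hm⟩ := he
    have h2 : n / 2 = m := by omega
    have hne : n = 2 * m := by omega
    rw [h2, hne, Bq_even]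
    calc Wint m x ≤ K * (m.factorial : ℝ) * c ^ m := Wint_le β hβ x m
      _ ≤ K * ((m + 1).factorial : ℝ) * c ^ (m + 1) := hmono m
      _ ≤ 2 * (K * ((m + 1).factorial : ℝ) * c ^ (m + 1)) := by nlinarith [hK0, pow_nonneg hc0 (m+1), Nat.cast_nonneg (α := ℝ) (m+1).factorial, mul_nonneg (mul_nonneg hK0.le (Nat.cast_nonneg (α := ℝ) (m+1).factorial)) (pow_nonneg hc0 (m+1))]
  · obtain ⟨m, hm⟩ := ho
    have h2 : n / 2 = m := by omega
    rw [h2, hm]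
    calc Bq (2 * m + 1) x ≤ Wint m x + Wint (m + 1) x := Bq_odd_le m x
      _ ≤ K * (m.factorial : ℝ) * c ^ m + K * ((m + 1).factorial : ℝ) * c ^ (m + 1) := by
          exact add_le_add (Wint_le β hβ x m) (Wint_le β hβ x (m + 1))
      _ ≤ 2 * (K * ((m + 1).factorial : ℝ) * c ^ (m + 1)) := by
          have := hmono m
          linarith

lemma four_pow_fact (m : ℕ) :
    (4:ℝ) ^ m * ((m.factorial : ℝ)) ^ 2 ≤ (2 * (m:ℝ) + 1) * ((2 * m).factorial : ℝ) := by
  induction m with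
  | zero => norm_num [Nat.factorial]
  | succ m ih =>
    have hf : (0:ℝ) ≤ ((2 * m).factorial : ℝ) := Nat.cast_nonneg _
    have h5 : (4:ℝ) ^ (m + 1) * (((m + 1).factorial : ℝ)) ^ 2
        = 4 * ((m:ℝ) + 1) ^ 2 * ((4:ℝ) ^ m * ((m.factorial : ℝ)) ^ 2) := by
      rw [Nat.factorial_succ]
      push_cast
      ring
    have e : ((2 * (m + 1)).factorial : ℝ)
        = (2 * (m:ℝ) + 2) * ((2 * (m:ℝ) + 1) * ((2 * m).factorial : ℝ)) := by
      rw [show 2 * (m + 1) = (2 * m + 1) + 1 from by ring, Nat.factorial_succ,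
        Nat.factorial_succ]
      push_cast
      ring
    rw [h5, e]
    have step1 : 4 * ((m:ℝ) + 1) ^ 2 * ((4:ℝ) ^ m * ((m.factorial : ℝ)) ^ 2)
        ≤ 4 * ((m:ℝ) + 1) ^ 2 * ((2 * (m:ℝ) + 1) * ((2 * m).factorial : ℝ)) := by
      apply mul_le_mul_of_nonneg_left ih (by positivity)
    refine le_trans step1 ?_
    have h6 : 4 * ((m:ℝ) + 1) ^ 2 ≤ (2 * (m:ℝ) + 2) * (2 * ((m:ℝ) + 1) + 1) := by
      nlinarith [Nat.cast_nonneg (α := ℝ) m]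
    have h7 : (0:ℝ) ≤ (2 * (m:ℝ) + 1) * ((2 * m).factorial : ℝ) := by positivity
    push_cast
    nlinarith [h6, h7]
lemma pow_fact_div_bound (n : ℕ) :
    (2:ℝ) ^ n * (((n / 2 + 1).factorial : ℝ)) ^ 2
      ≤ 2 * ((n:ℝ) + 1) ^ 3 * (n.factorial : ℝ) := by
  have h1 : 2 * (n / 2) ≤ n := by omega
  have h2 : n ≤ 2 * (n / 2) + 1 := by omega
  have e2n : (2:ℝ) ^ n ≤ 2 * 4 ^ (n / 2) := by
    calc (2:ℝ) ^ n ≤ (2:ℝ) ^ (2 * (n / 2) + 1) := pow_le_pow_right₀ one_le_two h2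
      _ = 2 * 4 ^ (n / 2) := by rw [pow_succ, pow_mul]; norm_num [mul_comm]
  have e4 := four_pow_fact (n / 2)
  have efact : ((2 * (n / 2)).factorial : ℝ) ≤ (n.factorial : ℝ) := by
    exact_mod_cast Nat.factorial_le h1
  have hF : (((n / 2 + 1).factorial : ℝ)) ^ 2
      = (((n / 2 : ℕ):ℝ) + 1) ^ 2 * (((n / 2).factorial : ℝ)) ^ 2 := by
    rw [Nat.factorial_succ]; push_cast; ring
  have hcube : (((n / 2 : ℕ):ℝ) + 1) ^ 2 * (2 * ((n / 2 : ℕ):ℝ) + 1) ≤ ((n:ℝ) + 1) ^ 3 := by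
    have c1 : 2 * ((n / 2 : ℕ):ℝ) ≤ (n:ℝ) := by exact_mod_cast h1
    have c0 : (0:ℝ) ≤ ((n / 2 : ℕ):ℝ) := Nat.cast_nonneg _
    have p1 : (((n / 2 : ℕ):ℝ) + 1) ^ 2 ≤ ((n:ℝ) + 1) ^ 2 := by nlinarith
    have p2 : 2 * ((n / 2 : ℕ):ℝ) + 1 ≤ (n:ℝ) + 1 := by linarith
    calc (((n / 2 : ℕ):ℝ) + 1) ^ 2 * (2 * ((n / 2 : ℕ):ℝ) + 1)
        ≤ ((n:ℝ) + 1) ^ 2 * ((n:ℝ) + 1) := by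
          apply mul_le_mul p1 p2 (by linarith) (by positivity)
      _ = ((n:ℝ) + 1) ^ 3 := by ring
  calc (2:ℝ) ^ n * (((n / 2 + 1).factorial : ℝ)) ^ 2
      ≤ (2 * 4 ^ (n / 2)) * (((n / 2 + 1).factorial : ℝ)) ^ 2 :=
        mul_le_mul_of_nonneg_right e2n (sq_nonneg _)
    _ = 2 * (((n / 2 : ℕ):ℝ) + 1) ^ 2 * ((4:ℝ) ^ (n / 2) * (((n / 2).factorial : ℝ)) ^ 2) := by
        rw [hF]; ring
    _ ≤ 2 * (((n / 2 : ℕ):ℝ) + 1) ^ 2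
        * ((2 * ((n / 2 : ℕ):ℝ) + 1) * ((2 * (n / 2)).factorial : ℝ)) := by
        apply mul_le_mul_of_nonneg_left e4 (by positivity)
    _ ≤ 2 * (((n / 2 : ℕ):ℝ) + 1) ^ 2 * ((2 * ((n / 2 : ℕ):ℝ) + 1) * (n.factorial : ℝ)) := by
        apply mul_le_mul_of_nonneg_left _ (by positivity)
        apply mul_le_mul_of_nonneg_left efact (by positivity)
    _ = 2 * ((((n / 2 : ℕ):ℝ) + 1) ^ 2 * (2 * ((n / 2 : ℕ):ℝ) + 1)) * (n.factorial : ℝ) := by ring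
    _ ≤ 2 * ((n:ℝ) + 1) ^ 3 * (n.factorial : ℝ) := by
        apply mul_le_mul_of_nonneg_right _ (Nat.cast_nonneg _)
        apply mul_le_mul_of_nonneg_left hcube (by norm_num)

lemma pow_half_bound (a : ℝ) (ha : 1 ≤ a) (n : ℕ) :
    a ^ (n / 2 + 1) ≤ a * (Real.sqrt a) ^ n := by
  have ha0 : (0:ℝ) ≤ a := le_trans zero_le_one ha
  have hs1 : 1 ≤ Real.sqrt a := Real.one_le_sqrt.2 ha
  have e1 : a ^ (n / 2 + 1) = a * (Real.sqrt a) ^ (2 * (n / 2)) := by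
    rw [pow_mul, Real.sq_sqrt ha0, pow_succ]
    ring
  rw [e1]
  apply mul_le_mul_of_nonneg_left _ ha0
  exact pow_le_pow_right₀ hs1 (by omega)

lemma term_bound_gen (K cx cy tA Bx By : ℝ) (hK0 : 0 < K) (hcx1 : 1 ≤ cx) (hcy1 : 1 ≤ cy)
    (htA : 0 ≤ tA) (n : ℕ)
    (hBx : Bx ≤ 2 * (K * (((n / 2 + 1).factorial : ℝ)) * cx ^ (n / 2 + 1)))
    (hBy : By ≤ 2 * (K * (((n / 2 + 1).factorial : ℝ)) * cy ^ (n / 2 + 1)))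
    (hBx0 : 0 ≤ Bx) (hBy0 : 0 ≤ By) :
    (2 * tA) ^ n / (n.factorial : ℝ) * (Bx * By)
      ≤ (8 * K ^ 2 * (cx * cy)) * (((n:ℝ) + 1) ^ 3 * (tA * Real.sqrt (cx * cy)) ^ n) := by
  have hcx0 : 0 ≤ cx := le_trans zero_le_one hcx1
  have hcy0 : 0 ≤ cy := le_trans zero_le_one hcy1
  have hcc1 : 1 ≤ cx * cy := one_le_mul_of_one_le_of_one_le hcx1 hcy1
  have hfn : (0:ℝ) < (n.factorial : ℝ) := by exact_mod_cast Nat.factorial_pos n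
  have hprod : Bx * By
      ≤ 4 * K ^ 2 * (((n / 2 + 1).factorial : ℝ)) ^ 2 * (cx * cy) ^ (n / 2 + 1) := by
    calc Bx * By
        ≤ (2 * (K * (((n / 2 + 1).factorial : ℝ)) * cx ^ (n / 2 + 1)))
          * (2 * (K * (((n / 2 + 1).factorial : ℝ)) * cy ^ (n / 2 + 1))) :=
          mul_le_mul hBx hBy hBy0 (by positivity)
      _ = 4 * K ^ 2 * (((n / 2 + 1).factorial : ℝ)) ^ 2 * (cx * cy) ^ (n / 2 + 1) := by
          rw [mul_pow]
          ring
  have step1 : (2 * tA) ^ n / (n.factorial : ℝ) * (Bx * By)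
      ≤ (2 * tA) ^ n / (n.factorial : ℝ)
        * (4 * K ^ 2 * (((n / 2 + 1).factorial : ℝ)) ^ 2 * (cx * cy) ^ (n / 2 + 1)) := by
    apply mul_le_mul_of_nonneg_left hprod (by positivity)
  refine le_trans step1 ?_
  rw [div_mul_eq_mul_div, div_le_iff₀ hfn]
  have hA := pow_fact_div_bound n
  have hB := pow_half_bound (cx * cy) hcc1 n
  have e1 : (2 * tA) ^ n * (4 * K ^ 2 * (((n / 2 + 1).factorial : ℝ)) ^ 2 * (cx * cy) ^ (n / 2 + 1))
      = (4 * K ^ 2 * tA ^ n * (cx * cy) ^ (n / 2 + 1))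
        * ((2:ℝ) ^ n * (((n / 2 + 1).factorial : ℝ)) ^ 2) := by
    rw [mul_pow]
    ring
  rw [e1]
  calc (4 * K ^ 2 * tA ^ n * (cx * cy) ^ (n / 2 + 1))
        * ((2:ℝ) ^ n * (((n / 2 + 1).factorial : ℝ)) ^ 2)
      ≤ (4 * K ^ 2 * tA ^ n * (cx * cy) ^ (n / 2 + 1))
        * (2 * ((n:ℝ) + 1) ^ 3 * (n.factorial : ℝ)) := by
        apply mul_le_mul_of_nonneg_left hA (by positivity)
    _ = (8 * K ^ 2 * ((n:ℝ) + 1) ^ 3 * (n.factorial : ℝ) * tA ^ n) * (cx * cy) ^ (n / 2 + 1) := by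
        ring
    _ ≤ (8 * K ^ 2 * ((n:ℝ) + 1) ^ 3 * (n.factorial : ℝ) * tA ^ n)
        * ((cx * cy) * (Real.sqrt (cx * cy)) ^ n) := by
        apply mul_le_mul_of_nonneg_left hB (by positivity)
    _ = 8 * K ^ 2 * (cx * cy) * (((n:ℝ) + 1) ^ 3 * (tA * Real.sqrt (cx * cy)) ^ n)
        * (n.factorial : ℝ) := by
        rw [mul_pow]
        ring

set_option maxHeartbeats 1000000 in
lemma summable_main (x y t : ℝ) (ht : |t| < 1) :
    Summable (fun n : ℕ => (2 * |t|) ^ n / (n.factorial : ℝ) * (Bq n x * Bq n y)) := by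
  have ht2 : t ^ 2 < 1 := by nlinarith [abs_nonneg t, sq_abs t]
  have hx4 : (0:ℝ) ≤ x ^ 4 := by positivity
  have hy4 : (0:ℝ) ≤ y ^ 4 := by positivity
  obtain ⟨β, hβpos, hβ1, hβD⟩ : ∃ β : ℝ, 0 < β ∧ β ≤ 1 ∧
      β * ((x ^ 4 + y ^ 4 + x ^ 4 * y ^ 4) + 1) ≤ 1 - t ^ 2 := by
    have hD0 : (0:ℝ) ≤ x ^ 4 + y ^ 4 + x ^ 4 * y ^ 4 := by positivity
    refine ⟨min 1 ((1 - t ^ 2) / ((x ^ 4 + y ^ 4 + x ^ 4 * y ^ 4) + 1)),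
      lt_min one_pos (div_pos (by linarith) (by linarith)), min_le_left _ _, ?_⟩
    have h := min_le_right 1 ((1 - t ^ 2) / ((x ^ 4 + y ^ 4 + x ^ 4 * y ^ 4) + 1))
    exact (le_div_iff₀ (by linarith)).1 h
  obtain ⟨K, hK0, hKx, hKy⟩ : ∃ K : ℝ, 0 < K ∧
      (∀ n : ℕ, Bq n x ≤ 2 * (K * (((n / 2 + 1).factorial : ℝ))
        * (Real.sqrt (1 + β * x ^ 4)) ^ (n / 2 + 1))) ∧
      (∀ n : ℕ, Bq n y ≤ 2 * (K * (((n / 2 + 1).factorial : ℝ))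
        * (Real.sqrt (1 + β * y ^ 4)) ^ (n / 2 + 1))) :=
    ⟨Real.sqrt Real.pi * Real.exp β⁻¹, by positivity,
      fun n => Bq_le β hβpos x n, fun n => Bq_le β hβpos y n⟩
  obtain ⟨cx, hcx1, hcx2, hcxB⟩ : ∃ c : ℝ, 1 ≤ c ∧ c ^ 2 = 1 + β * x ^ 4 ∧
      ∀ n : ℕ, Bq n x ≤ 2 * (K * (((n / 2 + 1).factorial : ℝ)) * c ^ (n / 2 + 1)) :=
    ⟨Real.sqrt (1 + β * x ^ 4), Real.one_le_sqrt.2 (by nlinarith),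
      Real.sq_sqrt (by nlinarith), hKx⟩
  obtain ⟨cy, hcy1, hcy2, hcyB⟩ : ∃ c : ℝ, 1 ≤ c ∧ c ^ 2 = 1 + β * y ^ 4 ∧
      ∀ n : ℕ, Bq n y ≤ 2 * (K * (((n / 2 + 1).factorial : ℝ)) * c ^ (n / 2 + 1)) :=
    ⟨Real.sqrt (1 + β * y ^ 4), Real.one_le_sqrt.2 (by nlinarith),
      Real.sq_sqrt (by nlinarith), hKy⟩
  have hcx0 : 0 ≤ cx := le_trans zero_le_one hcx1
  have hcy0 : 0 ≤ cy := le_trans zero_le_one hcy1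
  have hcc1 : 1 ≤ cx * cy := one_le_mul_of_one_le_of_one_le hcx1 hcy1
  have hcc0 : 0 ≤ cx * cy := le_trans zero_le_one hcc1
  obtain ⟨σ, hσdef⟩ : ∃ σ : ℝ, σ = |t| * Real.sqrt (cx * cy) := ⟨_, rfl⟩
  have hσ0 : 0 ≤ σ := by rw [hσdef]; positivity
  have hσ2 : σ ^ 2 = t ^ 2 * (cx * cy) := by
    rw [hσdef, mul_pow, sq_abs, Real.sq_sqrt hcc0]
  have hσlt : σ < 1 := by
    have h4 : σ ^ 4 < 1 := by
      have e4 : σ ^ 4 = t ^ 4 * ((1 + β * x ^ 4) * (1 + β * y ^ 4)) := by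
        rw [show σ ^ 4 = (σ ^ 2) ^ 2 from by ring, hσ2, ← hcx2, ← hcy2]
        ring
      rw [e4]
      have hprod : (1 + β * x ^ 4) * (1 + β * y ^ 4)
          ≤ 1 + β * (x ^ 4 + y ^ 4 + x ^ 4 * y ^ 4) := by
        have hβsq : β ^ 2 ≤ β := by nlinarith
        have hxy4 : (0:ℝ) ≤ x ^ 4 * y ^ 4 := by positivity
        nlinarith
      have hβD' : β * (x ^ 4 + y ^ 4 + x ^ 4 * y ^ 4) < 1 - t ^ 2 := by nlinarith
      have ht4 : t ^ 4 ≤ t ^ 2 := by nlinarith [sq_nonneg t, sq_nonneg (t ^ 2)]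
      have hb : (0:ℝ) ≤ 1 + β * (x ^ 4 + y ^ 4 + x ^ 4 * y ^ 4) := by nlinarith
      calc t ^ 4 * ((1 + β * x ^ 4) * (1 + β * y ^ 4))
          ≤ t ^ 4 * (1 + β * (x ^ 4 + y ^ 4 + x ^ 4 * y ^ 4)) := by
            apply mul_le_mul_of_nonneg_left hprod (by positivity)
        _ ≤ t ^ 2 * (1 + β * (x ^ 4 + y ^ 4 + x ^ 4 * y ^ 4)) :=
            mul_le_mul_of_nonneg_right ht4 hb
        _ = t ^ 2 + t ^ 2 * (β * (x ^ 4 + y ^ 4 + x ^ 4 * y ^ 4)) := by ring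
        _ ≤ t ^ 2 + β * (x ^ 4 + y ^ 4 + x ^ 4 * y ^ 4) := by
            nlinarith [mul_nonneg hβpos.le (by positivity : (0:ℝ) ≤ x ^ 4 + y ^ 4 + x ^ 4 * y ^ 4),
              sq_nonneg t]
        _ < 1 := by linarith
    by_contra hcon
    push_neg at hcon
    have h14 : (1:ℝ) ≤ σ ^ 4 := one_le_pow₀ hcon
    linarith
  have key : ∀ n : ℕ, (2 * |t|) ^ n / (n.factorial : ℝ) * (Bq n x * Bq n y)
      ≤ (8 * K ^ 2 * (cx * cy)) * (((n:ℝ) + 1) ^ 3 * σ ^ n) := by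
    intro n
    rw [hσdef]
    exact term_bound_gen K cx cy |t| (Bq n x) (Bq n y) hK0 hcx1 hcy1 (abs_nonneg t) n
      (hcxB n) (hcyB n) (Bq_nonneg n x) (Bq_nonneg n y)
  have hσn : ‖σ‖ < 1 := by rwa [Real.norm_eq_abs, abs_of_nonneg hσ0]
  have s3 := summable_pow_mul_geometric_of_norm_lt_one (R := ℝ) 3 hσn
  have s2 := summable_pow_mul_geometric_of_norm_lt_one (R := ℝ) 2 hσn
  have s1 := summable_pow_mul_geometric_of_norm_lt_one (R := ℝ) 1 hσn
  have s0 := summable_geometric_of_lt_one hσ0 hσlt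
  have hsum : Summable (fun n : ℕ => ((n:ℝ) + 1) ^ 3 * σ ^ n) := by
    have e : (fun n : ℕ => ((n:ℝ) + 1) ^ 3 * σ ^ n)
        = fun n : ℕ => (n:ℝ) ^ 3 * σ ^ n
            + (3 * ((n:ℝ) ^ 2 * σ ^ n) + (3 * ((n:ℝ) ^ 1 * σ ^ n) + σ ^ n)) := by
      funext n
      ring
    rw [e]
    exact s3.add (((s2.mul_left 3)).add (((s1.mul_left 3)).add s0))
  apply Summable.of_nonneg_of_le _ key (hsum.mul_left _)
  intro n
  have h1 := Bq_nonneg n x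
  have h2 := Bq_nonneg n y
  positivity
lemma cont_Iz_cexp (n : ℕ) (x : ℝ) :
    Continuous (fun s : ℝ => (Iz x s) ^ n * Complex.exp (-(s:ℂ) ^ 2)) := by
  have h := continuous_Iz_pow_cexp 0 n x
  simpa using h

lemma Fn_integrable (n : ℕ) (x y t : ℝ) :
    Integrable (fun p : ℝ × ℝ => ((2 * t : ℝ) : ℂ) ^ n / (n.factorial : ℂ)
      * ((Iz x p.1) ^ n * Complex.exp (-(p.1:ℂ) ^ 2)
        * ((Iz y p.2) ^ n * Complex.exp (-(p.2:ℂ) ^ 2)))) := by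
  rw [MeasureTheory.Measure.volume_eq_prod ℝ ℝ]
  exact ((integrable_Iz0 n x).mul_prod (integrable_Iz0 n y)).const_mul _

lemma Fn_norm_integral (n : ℕ) (x y t : ℝ) :
    ∫ p : ℝ × ℝ, ‖((2 * t : ℝ) : ℂ) ^ n / (n.factorial : ℂ)
      * ((Iz x p.1) ^ n * Complex.exp (-(p.1:ℂ) ^ 2)
        * ((Iz y p.2) ^ n * Complex.exp (-(p.2:ℂ) ^ 2)))‖
      = (2 * |t|) ^ n / (n.factorial : ℝ) * (Bq n x * Bq n y) := by
  have hc : ‖((2 * t : ℝ) : ℂ) ^ n / (n.factorial : ℂ)‖ = (2 * |t|) ^ n / (n.factorial : ℝ) := by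
    rw [norm_div, norm_pow, Complex.norm_real, Complex.norm_natCast, Real.norm_eq_abs,
      abs_mul, abs_two]
  have heq : (fun p : ℝ × ℝ => ‖((2 * t : ℝ) : ℂ) ^ n / (n.factorial : ℂ)
      * ((Iz x p.1) ^ n * Complex.exp (-(p.1:ℂ) ^ 2)
        * ((Iz y p.2) ^ n * Complex.exp (-(p.2:ℂ) ^ 2)))‖)
      = fun p : ℝ × ℝ => (2 * |t|) ^ n / (n.factorial : ℝ)
        * ((‖Iz x p.1‖ ^ n * Real.exp (-p.1 ^ 2)) * (‖Iz y p.2‖ ^ n * Real.exp (-p.2 ^ 2))) := by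
    funext p
    rw [norm_mul, hc, norm_mul, norm_Iz_integrand, norm_Iz_integrand]
  rw [heq, MeasureTheory.integral_const_mul, MeasureTheory.Measure.volume_eq_prod ℝ ℝ,
    MeasureTheory.integral_prod_mul (L := ℝ)
      (f := fun s => ‖Iz x s‖ ^ n * Real.exp (-s ^ 2))
      (g := fun u => ‖Iz y u‖ ^ n * Real.exp (-u ^ 2))]
  rfl

lemma Fn_tsum_pointwise (x y t : ℝ) (p : ℝ × ℝ) :
    ∑' n : ℕ, ((2 * t : ℝ) : ℂ) ^ n / (n.factorial : ℂ)
      * ((Iz x p.1) ^ n * Complex.exp (-(p.1:ℂ) ^ 2)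
        * ((Iz y p.2) ^ n * Complex.exp (-(p.2:ℂ) ^ 2)))
      = Complex.exp (2 * (t:ℂ) * Iz x p.1 * Iz y p.2 - (p.1:ℂ) ^ 2 - (p.2:ℂ) ^ 2) := by
  have hpt : ∀ n : ℕ, ((2 * t : ℝ) : ℂ) ^ n / (n.factorial : ℂ)
      * ((Iz x p.1) ^ n * Complex.exp (-(p.1:ℂ) ^ 2)
        * ((Iz y p.2) ^ n * Complex.exp (-(p.2:ℂ) ^ 2)))
      = (2 * (t:ℂ) * Iz x p.1 * Iz y p.2) ^ n / (n.factorial : ℂ)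
        * (Complex.exp (-(p.1:ℂ) ^ 2) * Complex.exp (-(p.2:ℂ) ^ 2)) := by
    intro n
    rw [mul_pow, mul_pow, show ((2 * t : ℝ) : ℂ) = 2 * (t:ℂ) from by push_cast; ring]
    rw [mul_pow]
    ring
  rw [tsum_congr hpt, tsum_mul_right]
  have hexp : (∑' n : ℕ, (2 * (t:ℂ) * Iz x p.1 * Iz y p.2) ^ n / (n.factorial : ℂ))
      = Complex.exp (2 * (t:ℂ) * Iz x p.1 * Iz y p.2) := by
    rw [Complex.exp_eq_exp_ℂ, NormedSpace.exp_eq_tsum_div]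
  rw [hexp, ← Complex.exp_add, ← Complex.exp_add]
  congr 1
  ring

lemma big_integrable (x y t : ℝ) (ht : |t| < 1) :
    Integrable (fun p : ℝ × ℝ =>
      Complex.exp (2 * (t:ℂ) * Iz x p.1 * Iz y p.2 - (p.1:ℂ) ^ 2 - (p.2:ℂ) ^ 2)) := by
  have h1t : 0 < 1 - |t| := by linarith
  have hmeas : Continuous (fun p : ℝ × ℝ =>
      Complex.exp (2 * (t:ℂ) * Iz x p.1 * Iz y p.2 - (p.1:ℂ) ^ 2 - (p.2:ℂ) ^ 2)) := by
    apply Complex.continuous_exp.comp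
    apply Continuous.sub
    apply Continuous.sub
    · apply Continuous.mul
      · apply Continuous.mul continuous_const
        exact (continuous_const.add ((Complex.continuous_ofReal.comp continuous_fst).mul
          continuous_const))
      · exact (continuous_const.add ((Complex.continuous_ofReal.comp continuous_snd).mul
          continuous_const))
    · exact (Complex.continuous_ofReal.comp continuous_fst).pow 2
    · exact (Complex.continuous_ofReal.comp continuous_snd).pow 2
  have hbound : Integrable (fun p : ℝ × ℝ => Real.exp (2 * |t| * |x| * |y|)
      * (Real.exp (-(1 - |t|) * p.1 ^ 2) * Real.exp (-(1 - |t|) * p.2 ^ 2))) := by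
    rw [MeasureTheory.Measure.volume_eq_prod ℝ ℝ]
    exact ((integrable_exp_neg_mul_sq h1t).mul_prod (integrable_exp_neg_mul_sq h1t)).const_mul _
  apply hbound.mono' hmeas.aestronglyMeasurable
  filter_upwards with p
  have hre : (2 * (t:ℂ) * Iz x p.1 * Iz y p.2 - (p.1:ℂ) ^ 2 - (p.2:ℂ) ^ 2).re
      = 2 * t * (x * y - p.1 * p.2) - p.1 ^ 2 - p.2 ^ 2 := by
    simp [Iz, Complex.mul_re, Complex.mul_im, Complex.add_re, Complex.add_im,
      ← Complex.ofReal_pow, Complex.ofReal_re]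
    ring
  rw [Complex.norm_exp, hre, ← Real.exp_add, ← Real.exp_add]
  apply Real.exp_le_exp.2
  have h1 : 2 * t * (x * y) ≤ 2 * |t| * |x| * |y| := by
    have := le_abs_self (2 * t * (x * y))
    calc 2 * t * (x * y) ≤ |2 * t * (x * y)| := le_abs_self _
      _ = 2 * |t| * |x| * |y| := by rw [abs_mul, abs_mul, abs_mul, abs_two]; ring
  have h2 : -(2 * t) * (p.1 * p.2) ≤ |t| * (p.1 ^ 2 + p.2 ^ 2) := by
    calc -(2 * t) * (p.1 * p.2) ≤ |(-(2 * t)) * (p.1 * p.2)| := le_abs_self _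
      _ = 2 * |t| * (|p.1| * |p.2|) := by
          rw [abs_mul, abs_neg, abs_mul, abs_two, abs_mul]
          try ring
      _ ≤ |t| * (p.1 ^ 2 + p.2 ^ 2) := by
          nlinarith [sq_nonneg (|p.1| - |p.2|), abs_nonneg t, sq_abs p.1, sq_abs p.2,
            abs_nonneg p.1, abs_nonneg p.2]
  nlinarith [h1, h2]
lemma tsum_Igauss_eq (x y t : ℝ) (ht : |t| < 1) :
    ∑' n : ℕ, ((2 * t : ℝ) : ℂ) ^ n / (n.factorial : ℂ) * (Igauss n x * Igauss n y)
      = ((Real.pi : ℂ)) ^ (1/2 : ℂ) * ((Real.pi : ℂ) / (1 - (t:ℂ) ^ 2)) ^ (1/2 : ℂ)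
        * Complex.exp ((((2 * x * y * t - t ^ 2 * (x ^ 2 + y ^ 2)) / (1 - t ^ 2) : ℝ) : ℂ)) := by
  have ht2 : t ^ 2 < 1 := by nlinarith [abs_nonneg t, sq_abs t]
  -- Step 1: each term is an integral over ℝ²
  have hGn : ∀ n : ℕ, ((2 * t : ℝ) : ℂ) ^ n / (n.factorial : ℂ) * (Igauss n x * Igauss n y)
      = ∫ p : ℝ × ℝ, ((2 * t : ℝ) : ℂ) ^ n / (n.factorial : ℂ)
        * ((Iz x p.1) ^ n * Complex.exp (-(p.1:ℂ) ^ 2)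
          * ((Iz y p.2) ^ n * Complex.exp (-(p.2:ℂ) ^ 2))) := by
    intro n
    rw [MeasureTheory.integral_const_mul, Igauss, Igauss,
      MeasureTheory.Measure.volume_eq_prod ℝ ℝ, MeasureTheory.integral_prod_mul
        (f := fun s : ℝ => Iz x s ^ n * Complex.exp (-(s:ℂ) ^ 2))
        (g := fun u : ℝ => Iz y u ^ n * Complex.exp (-(u:ℂ) ^ 2))]
  rw [tsum_congr hGn]
  -- Step 2: swap sum and integral
  have hmeas : ∀ n : ℕ, MeasureTheory.AEStronglyMeasurable
      (fun p : ℝ × ℝ => ((2 * t : ℝ) : ℂ) ^ n / (n.factorial : ℂ)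
        * ((Iz x p.1) ^ n * Complex.exp (-(p.1:ℂ) ^ 2)
          * ((Iz y p.2) ^ n * Complex.exp (-(p.2:ℂ) ^ 2)))) volume := by
    intro n
    apply Continuous.aestronglyMeasurable
    exact continuous_const.mul (((cont_Iz_cexp n x).comp continuous_fst).mul
      ((cont_Iz_cexp n y).comp continuous_snd))
  have hlin : ∑' n : ℕ, ∫⁻ p : ℝ × ℝ, ‖((2 * t : ℝ) : ℂ) ^ n / (n.factorial : ℂ)
      * ((Iz x p.1) ^ n * Complex.exp (-(p.1:ℂ) ^ 2)
        * ((Iz y p.2) ^ n * Complex.exp (-(p.2:ℂ) ^ 2)))‖₊ ≠ ⊤ := by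
    have he : ∀ n : ℕ, ∫⁻ p : ℝ × ℝ, ‖((2 * t : ℝ) : ℂ) ^ n / (n.factorial : ℂ)
        * ((Iz x p.1) ^ n * Complex.exp (-(p.1:ℂ) ^ 2)
          * ((Iz y p.2) ^ n * Complex.exp (-(p.2:ℂ) ^ 2)))‖₊
        = ENNReal.ofReal ((2 * |t|) ^ n / (n.factorial : ℝ) * (Bq n x * Bq n y)) := by
      intro n
      rw [← Fn_norm_integral n x y t]
      exact (MeasureTheory.ofReal_integral_norm_eq_lintegral_enorm (Fn_integrable n x y t)).symm
    rw [tsum_congr he, ← ENNReal.ofReal_tsum_of_nonneg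
      (fun n => by
        have h1 := Bq_nonneg n x
        have h2 := Bq_nonneg n y
        positivity) (summable_main x y t ht)]
    exact ENNReal.ofReal_ne_top
  rw [← MeasureTheory.integral_tsum hmeas hlin]
  -- Step 3: evaluate the inner tsum pointwise
  rw [MeasureTheory.integral_congr_ae (Filter.Eventually.of_forall (Fn_tsum_pointwise x y t))]
  -- Step 4: Fubini
  rw [MeasureTheory.Measure.volume_eq_prod ℝ ℝ, MeasureTheory.integral_prod _
    ((MeasureTheory.Measure.volume_eq_prod ℝ ℝ) ▸ big_integrable x y t ht)]
  -- Step 5: inner Gaussian integral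
  have hinner : ∀ s : ℝ, (∫ u : ℝ, Complex.exp
      (2 * (t:ℂ) * Iz x s * Iz y u - (s:ℂ) ^ 2 - (u:ℂ) ^ 2))
      = ((Real.pi : ℂ)) ^ (1/2 : ℂ)
        * Complex.exp (2 * (t:ℂ) * Iz x s * (y:ℂ) - (s:ℂ) ^ 2 - (t:ℂ) ^ 2 * (Iz x s) ^ 2) := by
    intro s
    have hrw : ∀ u : ℝ, 2 * (t:ℂ) * Iz x s * Iz y u - (s:ℂ) ^ 2 - (u:ℂ) ^ 2
        = (-1 : ℂ) * (u:ℂ) ^ 2 + (2 * (t:ℂ) * Iz x s * Complex.I) * (u:ℂ)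
          + (2 * (t:ℂ) * Iz x s * (y:ℂ) - (s:ℂ) ^ 2) := by
      intro u
      simp only [Iz]
      ring
    simp only [hrw]
    rw [integral_cexp_quadratic (by norm_num : (-1:ℂ).re < 0)]
    have e0 : ((Real.pi : ℂ) / -(-1)) ^ (1/2 : ℂ) = ((Real.pi : ℂ)) ^ (1/2 : ℂ) := by norm_num
    rw [e0]
    congr 1
    have hcc : (2 * (t:ℂ) * Iz x s * Complex.I) ^ 2 = -(2 * (t:ℂ) * Iz x s) ^ 2 := by
      rw [mul_pow (2 * (t:ℂ) * Iz x s) Complex.I 2, Complex.I_sq]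
      ring
    rw [hcc]
    ring
  rw [MeasureTheory.integral_congr_ae (Filter.Eventually.of_forall hinner)]
  rw [MeasureTheory.integral_const_mul]
  -- Step 6: outer Gaussian integral
  have hbre : ((t:ℂ) ^ 2 - 1).re < 0 := by
    have : ((t:ℂ) ^ 2 - 1).re = t ^ 2 - 1 := by
      simp [Complex.sub_re, Complex.one_re, ← Complex.ofReal_pow, Complex.ofReal_re]
    rw [this]
    linarith
  have hrw2 : ∀ s : ℝ, 2 * (t:ℂ) * Iz x s * (y:ℂ) - (s:ℂ) ^ 2 - (t:ℂ) ^ 2 * (Iz x s) ^ 2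
      = ((t:ℂ) ^ 2 - 1) * (s:ℂ) ^ 2
        + (2 * (t:ℂ) * (y:ℂ) * Complex.I - 2 * (t:ℂ) ^ 2 * (x:ℂ) * Complex.I) * (s:ℂ)
        + (2 * (t:ℂ) * (x:ℂ) * (y:ℂ) - (t:ℂ) ^ 2 * (x:ℂ) ^ 2) := by
    intro s
    simp only [Iz]
    linear_combination (-(t:ℂ) ^ 2 * (s:ℂ) ^ 2) * Complex.I_sq
  simp only [hrw2]
  rw [integral_cexp_quadratic hbre]
  have hden : (1 : ℂ) - (t:ℂ) ^ 2 ≠ 0 := by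
    have h0 : ((1 - t ^ 2 : ℝ) : ℂ) ≠ 0 := by
      rw [Complex.ofReal_ne_zero]
      exact ne_of_gt (by nlinarith)
    convert h0 using 1
    push_cast
    ring
  have hden2 : ((t:ℂ) ^ 2 - 1) ≠ 0 := by
    intro hcon
    apply hden
    linear_combination -hcon
  have e5 : ((Real.pi : ℂ) / -((t:ℂ) ^ 2 - 1)) = (Real.pi : ℂ) / (1 - (t:ℂ) ^ 2) := by
    rw [neg_sub]
  rw [e5, ← mul_assoc]
  congr 1
  have hcc : (2 * (t:ℂ) * (y:ℂ) * Complex.I - 2 * (t:ℂ) ^ 2 * (x:ℂ) * Complex.I) ^ 2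
      = -(2 * (t:ℂ) * (y:ℂ) - 2 * (t:ℂ) ^ 2 * (x:ℂ)) ^ 2 := by
    rw [show 2 * (t:ℂ) * (y:ℂ) * Complex.I - 2 * (t:ℂ) ^ 2 * (x:ℂ) * Complex.I
      = (2 * (t:ℂ) * (y:ℂ) - 2 * (t:ℂ) ^ 2 * (x:ℂ)) * Complex.I from by ring,
      mul_pow, Complex.I_sq]
    ring
  rw [hcc]
  congr 1
  push_cast
  field_simp
  ring
lemma hPB (x : ℝ) (n : ℕ) :
    |Real.sqrt Real.pi * (mq n).eval x / 2 ^ n| ≤ Bq n x := by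
  have h := norm_Igauss_le n x
  rw [Igauss_eq] at h
  have e : ((Real.sqrt Real.pi * (mq n).eval x / 2 ^ n : ℝ) : ℂ)
      = (Real.sqrt Real.pi : ℂ) * (((mq n).eval x : ℝ) : ℂ) / 2 ^ n := by
    push_cast
    ring
  rw [← e, Complex.norm_real, Real.norm_eq_abs] at h
  exact h

/-- Mehler's formula: `Σ_n t^n Ψ_n(x) Ψ_n(y)
  = (π(1-t²))^{-1/2} exp((4xyt - (x²+y²)(1+t²))/(2(1-t²)))` for `|t| < 1`. -/
theorem mehler_formula (x y t : ℝ) (ht : |t| < 1) :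
    ∑' n : ℕ, t ^ n * hermiteFun n x * hermiteFun n y
      = (Real.pi * (1 - t ^ 2)) ^ (-(1 : ℝ) / 2) *
        Real.exp ((4 * x * y * t - (x ^ 2 + y ^ 2) * (1 + t ^ 2)) / (2 * (1 - t ^ 2))) := by
  have ht2 : t ^ 2 < 1 := by nlinarith [abs_nonneg t, sq_abs t]
  have h1t : (0:ℝ) < 1 - t ^ 2 := by linarith
  have hssπ : Real.sqrt Real.pi * Real.sqrt Real.pi = Real.pi :=
    Real.mul_self_sqrt Real.pi_pos.le
  -- the per-term real identity
  have hreal : ∀ n : ℕ, t ^ n * hermiteFun n x * hermiteFun n y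
      = (Real.exp (-(x ^ 2 + y ^ 2) / 2) / (Real.pi * Real.sqrt Real.pi))
        * ((2 * t) ^ n / (n.factorial : ℝ)
          * ((Real.sqrt Real.pi * (mq n).eval x / 2 ^ n)
            * (Real.sqrt Real.pi * (mq n).eval y / 2 ^ n))) := by
    intro n
    rw [hermiteFun, hermiteFun, physHermite_eq, physHermite_eq]
    have hfpos : (0:ℝ) < (n.factorial : ℝ) := by exact_mod_cast Nat.factorial_pos n
    have hrn : (0:ℝ) < (2:ℝ) ^ n * (n.factorial : ℝ) * Real.sqrt Real.pi := by positivity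
    have hA2 : (((2:ℝ) ^ n * (n.factorial : ℝ) * Real.sqrt Real.pi) ^ (-(1:ℝ)/2)) ^ 2
        = ((2:ℝ) ^ n * (n.factorial : ℝ) * Real.sqrt Real.pi)⁻¹ := by
      rw [← Real.rpow_natCast (((2:ℝ) ^ n * (n.factorial : ℝ) * Real.sqrt Real.pi)
        ^ (-(1:ℝ)/2)) 2, ← Real.rpow_mul hrn.le]
      rw [show (-(1:ℝ)/2 * ((2:ℕ):ℝ)) = -1 from by push_cast; ring]
      exact Real.rpow_neg_one _
    have hee : Real.exp (-x ^ 2 / 2) * Real.exp (-y ^ 2 / 2)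
        = Real.exp (-(x ^ 2 + y ^ 2) / 2) := by
      rw [← Real.exp_add]
      congr 1
      ring
    rw [show t ^ n * (((2:ℝ) ^ n * (n.factorial : ℝ) * Real.sqrt Real.pi) ^ (-(1:ℝ)/2)
          * (mq n).eval x * Real.exp (-x ^ 2 / 2))
        * (((2:ℝ) ^ n * (n.factorial : ℝ) * Real.sqrt Real.pi) ^ (-(1:ℝ)/2)
          * (mq n).eval y * Real.exp (-y ^ 2 / 2))
      = (((2:ℝ) ^ n * (n.factorial : ℝ) * Real.sqrt Real.pi) ^ (-(1:ℝ)/2)) ^ 2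
        * ((mq n).eval x * (mq n).eval y)
        * (Real.exp (-x ^ 2 / 2) * Real.exp (-y ^ 2 / 2)) * t ^ n from by ring, hA2, hee]
    obtain ⟨a, ha⟩ : ∃ a : ℝ, Real.sqrt Real.pi = a := ⟨_, rfl⟩
    have hπa : Real.pi = a * a := by rw [← ha]; exact hssπ.symm
    have ha0 : 0 < a := by rw [← ha]; positivity
    rw [ha, hπa]
    have hane : a ≠ 0 := ne_of_gt ha0
    have hfne : (n.factorial : ℝ) ≠ 0 := ne_of_gt hfpos
    have h2ne : ((2:ℝ) ^ n) ≠ 0 := by positivity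
    field_simp
    ring
  -- summability of the real series
  have hsummain := summable_main x y t ht
  have habs : Summable (fun n : ℕ => |t ^ n * hermiteFun n x * hermiteFun n y|) := by
    refine Summable.of_nonneg_of_le (fun n => abs_nonneg _) ?_
      (hsummain.mul_left (|Real.exp (-(x ^ 2 + y ^ 2) / 2) / (Real.pi * Real.sqrt Real.pi)|))
    intro n
    rw [hreal n, abs_mul]
    apply mul_le_mul_of_nonneg_left _ (abs_nonneg _)
    rw [abs_mul, abs_div, abs_pow, abs_mul, abs_two, abs_of_nonneg
      (by positivity : (0:ℝ) ≤ (n.factorial : ℝ)), abs_mul]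
    apply mul_le_mul_of_nonneg_left _ (by positivity)
    exact mul_le_mul (hPB x n) (hPB y n) (abs_nonneg _) (Bq_nonneg n x)
  have hS : Summable (fun n : ℕ => t ^ n * hermiteFun n x * hermiteFun n y) :=
    Summable.of_abs habs
  -- pass to ℂ
  apply Complex.ofReal_injective
  rw [Complex.ofReal_tsum]
  have hterm : ∀ n : ℕ, ((t ^ n * hermiteFun n x * hermiteFun n y : ℝ) : ℂ)
      = ((Real.exp (-(x ^ 2 + y ^ 2) / 2) / (Real.pi * Real.sqrt Real.pi) : ℝ) : ℂ)
        * (((2 * t : ℝ) : ℂ) ^ n / (n.factorial : ℂ) * (Igauss n x * Igauss n y)) := by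
    intro n
    rw [hreal n, Igauss_eq, Igauss_eq]
    push_cast
    ring
  rw [tsum_congr hterm, tsum_mul_left, tsum_Igauss_eq x y t ht]
  -- convert the complex powers to real square roots
  have hcpow1 : ((Real.pi : ℂ)) ^ (1/2 : ℂ) = ((Real.sqrt Real.pi : ℝ) : ℂ) := by
    rw [Real.sqrt_eq_rpow, Complex.ofReal_cpow Real.pi_pos.le]
    push_cast
    rfl
  have hcpow2 : ((Real.pi : ℂ) / (1 - (t:ℂ) ^ 2)) ^ (1/2 : ℂ)
      = ((Real.sqrt (Real.pi / (1 - t ^ 2)) : ℝ) : ℂ) := by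
    have e : ((Real.pi : ℂ) / (1 - (t:ℂ) ^ 2)) = ((Real.pi / (1 - t ^ 2) : ℝ) : ℂ) := by
      push_cast
      ring
    rw [e, Real.sqrt_eq_rpow, Complex.ofReal_cpow (by positivity)]
    push_cast
    rfl
  rw [hcpow1, hcpow2, ← Complex.ofReal_exp]
  rw [← Complex.ofReal_mul, ← Complex.ofReal_mul, ← Complex.ofReal_mul]
  rw [Complex.ofReal_inj]
  -- the remaining real identity
  have hsqdiv : Real.sqrt (Real.pi / (1 - t ^ 2)) = Real.sqrt Real.pi / Real.sqrt (1 - t ^ 2) :=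
    Real.sqrt_div Real.pi_pos.le _
  have hst : 0 < Real.sqrt (1 - t ^ 2) := Real.sqrt_pos.2 h1t
  have hsp : 0 < Real.sqrt Real.pi := Real.sqrt_pos.2 Real.pi_pos
  have hkey : (Real.pi * (1 - t ^ 2)) ^ (-(1:ℝ)/2)
      = (Real.sqrt Real.pi * Real.sqrt (1 - t ^ 2))⁻¹ := by
    have e1 : (-(1:ℝ)/2) = -(1/2:ℝ) := by norm_num
    rw [e1, Real.rpow_neg (by positivity), ← Real.sqrt_eq_rpow,
      Real.sqrt_mul Real.pi_pos.le]
  have hexpeq : Real.exp (-(x ^ 2 + y ^ 2) / 2)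
      * Real.exp ((2 * x * y * t - t ^ 2 * (x ^ 2 + y ^ 2)) / (1 - t ^ 2))
      = Real.exp ((4 * x * y * t - (x ^ 2 + y ^ 2) * (1 + t ^ 2)) / (2 * (1 - t ^ 2))) := by
    rw [← Real.exp_add]
    congr 1
    field_simp
    ring
  rw [hkey, ← hexpeq, hsqdiv]
  obtain ⟨a, ha⟩ : ∃ a : ℝ, Real.sqrt Real.pi = a := ⟨_, rfl⟩
  have hπa : Real.pi = a * a := by rw [← ha]; exact hssπ.symm
  have ha0 : 0 < a := ha ▸ hsp
  obtain ⟨b, hb⟩ : ∃ b : ℝ, Real.sqrt (1 - t ^ 2) = b := ⟨_, rfl⟩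
  have hb0 : 0 < b := hb ▸ hst
  rw [ha, hb, hπa]
  have hane : a ≠ 0 := ne_of_gt ha0
  have hbne : b ≠ 0 := ne_of_gt hb0
  field_simp
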